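/- arXiv:1912.08152 — 8 statements merged into one kernel-verified Lean document; each statement's English description precedes it below -/
import Mathlib

section
/- Let (v,e) : I → ℝ² be a differentiable solution on an interval I of the system v′ = −v² − e, e′ = (1 − e) v, and suppose e(θ) ≠ 1 for all θ ∈ I. Then the quantity (v² + 2e − 1)/(e − 1)² is constant along the solution, i.e. there exists C ∈ ℝ with v(θ)² + 2 e(θ) − 1 = C (e(θ) − 1)² for all θ ∈ I. -/
/-- Along any differentiable solution of the characteristic derivative
system `v' = -v² - e`, `e' = (1 - e) v` on an interval where `e ≠ 1`, the quantity
`(v² + 2e - 1)/(e-1)²` is constant. -/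
theorem stmt1 (I : Set ℝ) (hI : I.OrdConnected) (v e : ℝ → ℝ)
    (hv : ∀ θ ∈ I, HasDerivAt v (-(v θ)^2 - e θ) θ)
    (he : ∀ θ ∈ I, HasDerivAt e ((1 - e θ) * v θ) θ)
    (hne : ∀ θ ∈ I, e θ ≠ 1) :
    ∃ C : ℝ, ∀ θ ∈ I, (v θ)^2 + 2 * e θ - 1 = C * (e θ - 1)^2 := by
  rcases Set.eq_empty_or_nonempty I with h | ⟨θ₀, hθ₀⟩
  · exact ⟨0, fun θ hθ => by simp [h] at hθ⟩
  set F : ℝ → ℝ := fun θ => ((v θ)^2 + 2 * e θ - 1) / (e θ - 1)^2 with hF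
  have hconv : Convex ℝ I := hI.convex
  have hder : ∀ θ ∈ I, HasDerivWithinAt F 0 I θ := by
    intro θ hθ
    have hD : e θ - 1 ≠ 0 := sub_ne_zero.mpr (hne θ hθ)
    have hN : HasDerivAt (fun θ => (v θ)^2 + 2 * e θ - 1)
        (2 * v θ * (-(v θ)^2 - e θ) + 2 * ((1 - e θ) * v θ)) θ := by
      have := (((hv θ hθ).fun_pow 2).add ((he θ hθ).const_mul 2)).sub_const 1
      exact this.congr_deriv (by norm_num <;> ring)
    have hDd : HasDerivAt (fun θ => (e θ - 1)^2)
        (2 * (e θ - 1) * ((1 - e θ) * v θ)) θ := by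
      have := ((he θ hθ).sub_const 1).fun_pow 2
      exact this.congr_deriv (by norm_num <;> ring)
    have hq := hN.div hDd (pow_ne_zero 2 hD)
    have h0 : ((2 * v θ * (-(v θ)^2 - e θ) + 2 * ((1 - e θ) * v θ)) * (e θ - 1)^2
        - ((v θ)^2 + 2 * e θ - 1) * (2 * (e θ - 1) * ((1 - e θ) * v θ)))
        / ((e θ - 1)^2)^2 = 0 := by
      field_simp
      ring
    rw [h0] at hq
    exact hq.hasDerivWithinAt
  have hconst : ∀ θ ∈ I, F θ = F θ₀ := by
    intro θ hθ
    have key := hconv.norm_image_sub_le_of_norm_hasDerivWithin_le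
      (C := 0) (f' := fun _ => (0 : ℝ)) hder (fun x hx => by simp) hθ₀ hθ
    rw [zero_mul] at key
    have := norm_le_zero_iff.mp key
    exact sub_eq_zero.mp this
  refine ⟨F θ₀, fun θ hθ => ?_⟩
  have hD : e θ - 1 ≠ 0 := sub_ne_zero.mpr (hne θ hθ)
  have h2 : ((v θ)^2 + 2 * e θ - 1) / (e θ - 1)^2 = F θ₀ := hconst θ hθ
  rw [div_eq_iff (pow_ne_zero 2 hD)] at h2
  exact h2
end

section
/- Let (v,e) be the maximal forward solution of the system v′ = −v² − e, e′ = (1 − e) v with initial data v(0) = v₀, e(0) = e₀ satisfying v₀² + 2 e₀ − 1 ≥ 0. Then the maximal interval of existence [0,T) is bounded (T < ∞), and |v(θ)| + |e(θ)| → ∞ as θ → T⁻; that is, the solution blows up in finite time. -/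
open Real Set Filter

namespace Stmt2Aux

noncomputable def xx (v₀ e₀ θ : ℝ) : ℝ := (1-e₀) + e₀*Real.cos θ + v₀*Real.sin θ
noncomputable def yy (v₀ e₀ θ : ℝ) : ℝ := -(e₀*Real.sin θ) + v₀*Real.cos θ

variable (v₀ e₀ : ℝ)

lemma xx0 : xx v₀ e₀ 0 = 1 := by simp [xx]

lemma yy0 : yy v₀ e₀ 0 = v₀ := by simp [yy]

lemma xx_cont : Continuous (xx v₀ e₀) := by unfold xx; fun_prop

lemma xx_deriv (θ : ℝ) : HasDerivAt (xx v₀ e₀) (yy v₀ e₀ θ) θ := by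
  have h : HasDerivAt (xx v₀ e₀) (0 + e₀*(-Real.sin θ) + v₀*(Real.cos θ)) θ :=
    ((hasDerivAt_const θ (1-e₀)).add ((Real.hasDerivAt_cos θ).const_mul e₀)).add
      ((Real.hasDerivAt_sin θ).const_mul v₀)
  convert h using 1
  simp only [yy]; ring

lemma yy_deriv (θ : ℝ) : HasDerivAt (yy v₀ e₀) ((1-e₀) - xx v₀ e₀ θ) θ := by
  have h : HasDerivAt (yy v₀ e₀) (-(e₀*(Real.cos θ)) + v₀*(-Real.sin θ)) θ :=
    (((Real.hasDerivAt_sin θ).const_mul e₀).neg).add ((Real.hasDerivAt_cos θ).const_mul v₀)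
  convert h using 1
  simp only [xx]; ring

lemma key (θ : ℝ) :
    (yy v₀ e₀ θ)^2 = (v₀^2 + 2*e₀ - 1) + 2*(1-e₀)*(xx v₀ e₀ θ) - (xx v₀ e₀ θ)^2 := by
  have h := Real.sin_sq_add_cos_sq θ
  simp only [xx, yy]
  linear_combination (e₀^2 + v₀^2) * h

lemma exists_zero (h : v₀^2 + 2*e₀ - 1 ≥ 0) : ∃ θ > 0, xx v₀ e₀ θ = 0 := by
  set R : ℝ := Real.sqrt (v₀^2 + e₀^2) with hR
  have hRsq : R^2 = v₀^2 + e₀^2 := Real.sq_sqrt (by positivity)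
  have hRnn : 0 ≤ R := Real.sqrt_nonneg _
  have hRpos : 0 < R := by
    rcases eq_or_lt_of_le hRnn with h0 | h0
    · exfalso
      have hs : v₀^2 + e₀^2 = 0 := by nlinarith
      have hv : v₀ = 0 := by nlinarith [sq_nonneg v₀, sq_nonneg e₀]
      have he : e₀ = 0 := by nlinarith [sq_nonneg v₀, sq_nonneg e₀]
      rw [hv, he] at h; norm_num at h
    · exact h0
  have habs : |e₀| ≤ R := by nlinarith [sq_abs e₀, abs_nonneg e₀, sq_nonneg v₀]
  have hb1 : -1 ≤ -e₀/R := by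
    rw [le_div_iff₀ hRpos]; have := le_abs_self e₀; linarith
  have hb2 : -e₀/R ≤ 1 := by
    rw [div_le_iff₀ hRpos]; have := neg_abs_le e₀; linarith
  obtain ⟨c, hcos, hsin⟩ : ∃ c, Real.cos c = -e₀/R ∧ Real.sin c = -v₀/R := by
    have hsa : Real.sin (Real.arccos (-e₀/R)) = |v₀|/R := by
      rw [Real.sin_arccos]
      have heq : 1 - (-e₀/R)^2 = (|v₀|/R)^2 := by
        rw [div_pow, div_pow, sq_abs]
        rw [eq_div_iff (by positivity), sub_mul, one_mul, div_mul_cancel₀ _ (by positivity : R^2 ≠ 0)]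
        nlinarith [hRsq]
      rw [heq, Real.sqrt_sq (by positivity)]
    rcases le_or_gt v₀ 0 with hv | hv
    · exact ⟨Real.arccos (-e₀/R), Real.cos_arccos hb1 hb2, by
        rw [hsa, abs_of_nonpos hv]⟩
    · refine ⟨-Real.arccos (-e₀/R), by rw [Real.cos_neg]; exact Real.cos_arccos hb1 hb2, ?_⟩
      rw [Real.sin_neg, hsa, abs_of_pos hv, neg_div]
  -- use c + 2π·k to make it positive? instead use c' := c or c + 2π, both have same cos/sin.
  have hxc : ∀ c', Real.cos c' = -e₀/R → Real.sin c' = -v₀/R → xx v₀ e₀ c' = (1-e₀) - R := by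
    intro c' h1 h2
    simp only [xx, h1, h2]
    field_simp
    nlinarith [hRsq]
  have hle : (1-e₀) - R ≤ 0 := by nlinarith [sq_abs (1-e₀), abs_nonneg (1-e₀), neg_abs_le (1-e₀), le_abs_self (1-e₀)]
  set c2 := c + (⌈(-c)/(2*Real.pi)⌉₊ : ℝ)*(2*Real.pi) with hc2def
  have hc2 : xx v₀ e₀ c2 ≤ 0 := by
    rw [hxc c2 (by rw [hc2def, Real.cos_add_nat_mul_two_pi]; exact hcos)
      (by rw [hc2def, Real.sin_add_nat_mul_two_pi]; exact hsin)]
    exact hle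
  have hc2nn : 0 ≤ c2 := by
    rw [hc2def]
    have := Nat.le_ceil ((-c)/(2*Real.pi))
    have h2pi : (0:ℝ) < 2*Real.pi := by positivity
    rw [div_le_iff₀ h2pi] at this
    linarith [this]
  -- IVT on [0, c2]
  have hIVT := intermediate_value_Icc' hc2nn ((xx_cont v₀ e₀).continuousOn)
  have h0mem : (0:ℝ) ∈ Icc (xx v₀ e₀ c2) (xx v₀ e₀ 0) := by
    rw [xx0]; exact ⟨hc2, by norm_num⟩
  obtain ⟨z, hz, hxz⟩ := hIVT h0mem
  refine ⟨z, ?_, hxz⟩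
  rcases eq_or_lt_of_le hz.1 with h0 | h0
  · exfalso; rw [← h0] at hxz; rw [xx0] at hxz; norm_num at hxz
  · exact h0

noncomputable def tstar (v₀ e₀ : ℝ) : ℝ := sInf {θ | 0 < θ ∧ xx v₀ e₀ θ = 0}

section tstarsec
variable (h : v₀^2 + 2*e₀ - 1 ≥ 0)
include h

lemma tstar_mem : 0 < tstar v₀ e₀ ∧ xx v₀ e₀ (tstar v₀ e₀) = 0 := by
  have hset : {θ | 0 < θ ∧ xx v₀ e₀ θ = 0} = {θ | 0 ≤ θ ∧ xx v₀ e₀ θ = 0} := by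
    ext θ
    simp only [Set.mem_setOf_eq]
    constructor
    · exact fun hθ => ⟨le_of_lt hθ.1, hθ.2⟩
    · rintro ⟨h1, h2⟩
      rcases eq_or_lt_of_le h1 with h0 | h0
      · exfalso; rw [← h0] at h2; rw [xx0] at h2; norm_num at h2
      · exact ⟨h0, h2⟩
  have hne : {θ | 0 < θ ∧ xx v₀ e₀ θ = 0}.Nonempty := by
    obtain ⟨θ, hθ, hx⟩ := exists_zero v₀ e₀ h
    exact ⟨θ, hθ, hx⟩
  have hbdd : BddBelow {θ | 0 < θ ∧ xx v₀ e₀ θ = 0} := ⟨0, fun θ hθ => le_of_lt hθ.1⟩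
  have hclosed : IsClosed {θ | 0 < θ ∧ xx v₀ e₀ θ = 0} := by
    rw [hset]
    have : {θ | 0 ≤ θ ∧ xx v₀ e₀ θ = 0} = Ici 0 ∩ (xx v₀ e₀)⁻¹' {0} := by
      ext θ; simp [Set.mem_setOf_eq]
    rw [this]
    exact isClosed_Ici.inter (isClosed_singleton.preimage (xx_cont v₀ e₀))
  exact hclosed.csInf_mem hne hbdd

lemma tstar_pos : 0 < tstar v₀ e₀ := (tstar_mem v₀ e₀ h).1

lemma xx_tstar : xx v₀ e₀ (tstar v₀ e₀) = 0 := (tstar_mem v₀ e₀ h).2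

omit h in
lemma xx_pos {θ : ℝ} (h0 : 0 ≤ θ) (hθ : θ < tstar v₀ e₀) : 0 < xx v₀ e₀ θ := by
  by_contra hle
  push_neg at hle
  have hne : xx v₀ e₀ θ ≠ 0 := by
    intro h2
    have h0' : 0 < θ := by
      rcases eq_or_lt_of_le h0 with h0' | h0'
      · exfalso; rw [← h0', xx0] at h2; norm_num at h2
      · exact h0'
    have : tstar v₀ e₀ ≤ θ := csInf_le ⟨0, fun t ht => le_of_lt ht.1⟩ ⟨h0', h2⟩
    linarith
  have hlt : xx v₀ e₀ θ < 0 := lt_of_le_of_ne hle hne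
  -- IVT on [0, θ] gives a zero below θ < tstar, contradiction
  have hIVT := intermediate_value_Icc' h0 ((xx_cont v₀ e₀).continuousOn)
  have h0mem : (0:ℝ) ∈ Icc (xx v₀ e₀ θ) (xx v₀ e₀ 0) := by
    rw [xx0]; exact ⟨le_of_lt hlt, by norm_num⟩
  obtain ⟨z, hz, hxz⟩ := hIVT h0mem
  have hz0 : 0 < z := by
    rcases eq_or_lt_of_le hz.1 with h0' | h0'
    · exfalso; rw [← h0', xx0] at hxz; norm_num at hxz
    · exact h0'
  have : tstar v₀ e₀ ≤ z := csInf_le ⟨0, fun t ht => le_of_lt ht.1⟩ ⟨hz0, hxz⟩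
  have hzθ : z ≤ θ := hz.2
  have : xx v₀ e₀ θ = 0 := by
    have : θ ≤ z := by linarith
    have : θ = z := le_antisymm this hzθ
    rw [this]; exact hxz
  exact hne this

end tstarsec

noncomputable def vv (v₀ e₀ θ : ℝ) : ℝ := yy v₀ e₀ θ / xx v₀ e₀ θ
noncomputable def ee (v₀ e₀ θ : ℝ) : ℝ := 1 - (1-e₀) / xx v₀ e₀ θ

lemma vv_deriv {θ : ℝ} (hx : xx v₀ e₀ θ ≠ 0) :
    HasDerivAt (vv v₀ e₀) (-(vv v₀ e₀ θ)^2 - ee v₀ e₀ θ) θ := by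
  have hd := (yy_deriv v₀ e₀ θ).div (xx_deriv v₀ e₀ θ) hx
  refine hd.congr_deriv ?_
  simp only [vv, ee]
  field_simp
  ring

lemma ee_deriv {θ : ℝ} (hx : xx v₀ e₀ θ ≠ 0) :
    HasDerivAt (ee v₀ e₀) ((1 - ee v₀ e₀ θ) * vv v₀ e₀ θ) θ := by
  have hd := ((hasDerivAt_const θ (1-e₀)).div (xx_deriv v₀ e₀ θ) hx).const_sub 1
  refine hd.congr_deriv ?_
  simp only [vv, ee]
  rw [sub_sub_cancel, zero_mul, zero_sub, neg_div, neg_neg, div_mul_div_comm, ← pow_two]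

lemma vv_sq {θ : ℝ} (hx : xx v₀ e₀ θ ≠ 0) :
    (vv v₀ e₀ θ)^2 = ((v₀^2 + 2*e₀ - 1) + 2*(1-e₀)*(xx v₀ e₀ θ) - (xx v₀ e₀ θ)^2)
      / (xx v₀ e₀ θ)^2 := by
  rw [← key]
  simp only [vv]
  rw [div_pow]

lemma vv0 : vv v₀ e₀ 0 = v₀ := by simp [vv, xx0, yy0]
lemma ee0 : ee v₀ e₀ 0 = e₀ := by simp [ee, xx0]

section blowup
variable (h : v₀^2 + 2*e₀ - 1 ≥ 0)
include h

lemma xx_tendsto : Tendsto (xx v₀ e₀) (nhdsWithin (tstar v₀ e₀) (Iio (tstar v₀ e₀))) (nhds 0) := by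
  have := ((xx_cont v₀ e₀).tendsto (tstar v₀ e₀)).mono_left
    (nhdsWithin_le_nhds (s := Iio (tstar v₀ e₀)))
  rwa [xx_tstar v₀ e₀ h] at this

lemma eventually_mem : ∀ᶠ θ in nhdsWithin (tstar v₀ e₀) (Iio (tstar v₀ e₀)),
    0 < θ ∧ θ < tstar v₀ e₀ := by
  have h1 : Ioo 0 (tstar v₀ e₀) ∈ nhdsWithin (tstar v₀ e₀) (Iio (tstar v₀ e₀)) :=
    Ioo_mem_nhdsLT_of_mem ⟨tstar_pos v₀ e₀ h, le_refl _⟩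
  filter_upwards [h1] with θ hθ using ⟨hθ.1, hθ.2⟩

lemma vv_sq_tendsto : Tendsto (fun θ => (vv v₀ e₀ θ)^2)
    (nhdsWithin (tstar v₀ e₀) (Iio (tstar v₀ e₀))) atTop := by
  set l := nhdsWithin (tstar v₀ e₀) (Iio (tstar v₀ e₀)) with hl
  have hxt := xx_tendsto v₀ e₀ h
  have hev := eventually_mem v₀ e₀ h
  have hxpos : ∀ᶠ θ in l, 0 < xx v₀ e₀ θ := by
    filter_upwards [hev] with θ hθ using xx_pos v₀ e₀ (le_of_lt hθ.1) hθ.2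
  rcases eq_or_lt_of_le h with h0 | h0
  · -- w₀ = 0 case: v² = 2A/x - 1 with A = (1+v₀²)/2 > 0
    have hA : (0:ℝ) < 1 - e₀ := by nlinarith [sq_nonneg v₀]
    have heq : ∀ᶠ θ in l, (vv v₀ e₀ θ)^2 = 2*(1-e₀) * (xx v₀ e₀ θ)⁻¹ - 1 := by
      filter_upwards [hxpos] with θ hθ
      rw [vv_sq v₀ e₀ (ne_of_gt hθ), ← h0]
      field_simp
      ring
    have hinv : Tendsto (fun θ => (xx v₀ e₀ θ)⁻¹) l atTop := by
      apply tendsto_inv_nhdsGT_zero.comp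
      apply tendsto_nhdsWithin_of_tendsto_nhds_of_eventually_within _ hxt hxpos
    have hsum : Tendsto (fun θ => 2*(1-e₀)*(xx v₀ e₀ θ)⁻¹ + (-1)) l atTop :=
      (hinv.const_mul_atTop (by linarith : (0:ℝ) < 2*(1-e₀))).atTop_add
        (tendsto_const_nhds : Tendsto (fun _ : ℝ => (-1:ℝ)) l (nhds (-1)))
    apply hsum.congr'
    filter_upwards [heq] with θ hθ
    rw [hθ]; ring
  · -- w₀ > 0 case
    have hnum : Tendsto (fun θ => (v₀^2 + 2*e₀ - 1) + 2*(1-e₀)*(xx v₀ e₀ θ) - (xx v₀ e₀ θ)^2)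
        l (nhds (v₀^2 + 2*e₀ - 1)) := by
      have : Tendsto (fun θ => (v₀^2 + 2*e₀ - 1) + 2*(1-e₀)*(xx v₀ e₀ θ) - (xx v₀ e₀ θ)^2)
          l (nhds ((v₀^2 + 2*e₀ - 1) + 2*(1-e₀)*(0:ℝ) - (0:ℝ)^2)) := by
        exact ((tendsto_const_nhds.add (hxt.const_mul _)).sub (hxt.pow 2))
      convert this using 2
      ring
    have hxsq : Tendsto (fun θ => ((xx v₀ e₀ θ)^2)⁻¹) l atTop := by
      apply tendsto_inv_nhdsGT_zero.comp
      apply tendsto_nhdsWithin_of_tendsto_nhds_of_eventually_within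
      · simpa using hxt.pow 2
      · filter_upwards [hxpos] with θ hθ using pow_pos hθ 2
    have hmul := hnum.pos_mul_atTop h0 hxsq
    apply hmul.congr'
    filter_upwards [hxpos] with θ hθ
    rw [vv_sq v₀ e₀ (ne_of_gt hθ), div_eq_mul_inv]

end blowup

/-- The vector field of the system. -/
def F (p : ℝ × ℝ) : ℝ × ℝ := (-(p.1)^2 - p.2, (1 - p.2) * p.1)

lemma lipF (R : ℝ) (hR : 0 ≤ R) :
    LipschitzOnWith (Real.toNNReal (2*R+1)) F (Metric.closedBall (0 : ℝ × ℝ) R) := by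
  apply LipschitzOnWith.of_dist_le_mul
  intro p hp q hq
  have hp1 : |p.1| ≤ R := by
    have := norm_fst_le p
    have h2 : ‖p‖ ≤ R := by simpa [Metric.mem_closedBall, dist_zero_right] using hp
    calc |p.1| = ‖p.1‖ := rfl
    _ ≤ ‖p‖ := norm_fst_le p
    _ ≤ R := h2
  have hp2 : |p.2| ≤ R := by
    have h2 : ‖p‖ ≤ R := by simpa [Metric.mem_closedBall, dist_zero_right] using hp
    calc |p.2| = ‖p.2‖ := rfl
    _ ≤ ‖p‖ := norm_snd_le p
    _ ≤ R := h2
  have hq1 : |q.1| ≤ R := by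
    have h2 : ‖q‖ ≤ R := by simpa [Metric.mem_closedBall, dist_zero_right] using hq
    calc |q.1| = ‖q.1‖ := rfl
    _ ≤ ‖q‖ := norm_fst_le q
    _ ≤ R := h2
  have hq2 : |q.2| ≤ R := by
    have h2 : ‖q‖ ≤ R := by simpa [Metric.mem_closedBall, dist_zero_right] using hq
    calc |q.2| = ‖q.2‖ := rfl
    _ ≤ ‖q‖ := norm_snd_le q
    _ ≤ R := h2
  have hd1 : dist p.1 q.1 ≤ dist p q := by rw [Prod.dist_eq]; exact le_max_left _ _
  have hd2 : dist p.2 q.2 ≤ dist p q := by rw [Prod.dist_eq]; exact le_max_right _ _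
  have hdist : (0:ℝ) ≤ dist p q := dist_nonneg
  rw [Prod.dist_eq (x := F p)]
  rw [Real.coe_toNNReal _ (by positivity)]
  apply max_le
  · simp only [F, Real.dist_eq]
    have e1 : |p.1 - q.1| ≤ dist p q := by rwa [Real.dist_eq] at hd1
    have e2 : |p.2 - q.2| ≤ dist p q := by rwa [Real.dist_eq] at hd2
    have key : -(p.1)^2 - p.2 - (-(q.1)^2 - q.2) = -((p.1 + q.1) * (p.1 - q.1)) - (p.2 - q.2) := by
      ring
    rw [key]
    calc |(-((p.1 + q.1) * (p.1 - q.1)) - (p.2 - q.2))|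
        ≤ |(p.1 + q.1) * (p.1 - q.1)| + |p.2 - q.2| := by
          have h := abs_sub (-((p.1 + q.1) * (p.1 - q.1))) (p.2 - q.2)
          simpa [abs_neg] using h
    _ = |p.1 + q.1| * |p.1 - q.1| + |p.2 - q.2| := by rw [abs_mul]
    _ ≤ 2*R * dist p q + dist p q := by
        apply add_le_add _ e2
        apply mul_le_mul _ e1 (abs_nonneg _) (by linarith)
        calc |p.1 + q.1| ≤ |p.1| + |q.1| := abs_add_le _ _
        _ ≤ 2*R := by linarith
    _ = (2*R+1) * dist p q := by ring
  · simp only [F, Real.dist_eq]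
    have e1 : |p.1 - q.1| ≤ dist p q := by rwa [Real.dist_eq] at hd1
    have e2 : |p.2 - q.2| ≤ dist p q := by rwa [Real.dist_eq] at hd2
    have key : (1 - p.2) * p.1 - (1 - q.2) * q.1
        = (p.1 - q.1) - (p.2 * (p.1 - q.1) + q.1 * (p.2 - q.2)) := by ring
    rw [key]
    calc |(p.1 - q.1) - (p.2 * (p.1 - q.1) + q.1 * (p.2 - q.2))|
        ≤ |p.1 - q.1| + |p.2 * (p.1 - q.1) + q.1 * (p.2 - q.2)| := abs_sub _ _
    _ ≤ |p.1 - q.1| + (|p.2| * |p.1 - q.1| + |q.1| * |p.2 - q.2|) := by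
        apply add_le_add_right
        calc |p.2 * (p.1 - q.1) + q.1 * (p.2 - q.2)|
            ≤ |p.2 * (p.1 - q.1)| + |q.1 * (p.2 - q.2)| := abs_add_le _ _
        _ = |p.2| * |p.1 - q.1| + |q.1| * |p.2 - q.2| := by rw [abs_mul, abs_mul]
    _ ≤ dist p q + (R * dist p q + R * dist p q) := by
        apply add_le_add e1
        apply add_le_add
        · exact mul_le_mul hp2 e1 (abs_nonneg _) hR
        · exact mul_le_mul hq1 e2 (abs_nonneg _) hR
    _ = (2*R+1) * dist p q := by ring
end Stmt2Aux

open Stmt2Aux Set Filter Metric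

/-- The maximal forward solution of `v' = -v² - e`, `e' = (1 - e) v`
with initial data satisfying `v₀² + 2 e₀ - 1 ≥ 0` blows up in finite time:
its maximal interval of existence `[0, T)` is bounded and `|v| + |e| → ∞` as `θ → T⁻`. -/
theorem stmt2 (v₀ e₀ : ℝ) (h : v₀^2 + 2 * e₀ - 1 ≥ 0)
    (v e : ℝ → ℝ) (T : EReal) (hT : 0 < T)
    (hsol : ∀ θ : ℝ, 0 ≤ θ → (θ : EReal) < T →
      HasDerivAt v (-(v θ)^2 - e θ) θ ∧ HasDerivAt e ((1 - e θ) * v θ) θ)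
    (hv0 : v 0 = v₀) (he0 : e 0 = e₀)
    (hmax : ∀ (T' : EReal) (v' e' : ℝ → ℝ), T < T' →
      (∀ θ : ℝ, 0 ≤ θ → (θ : EReal) < T' →
        HasDerivAt v' (-(v' θ)^2 - e' θ) θ ∧ HasDerivAt e' ((1 - e' θ) * v' θ) θ) →
      ¬(∀ θ : ℝ, 0 ≤ θ → (θ : EReal) < T → v' θ = v θ ∧ e' θ = e θ)) :
    ∃ Tr : ℝ, T = (Tr : EReal) ∧
      Filter.Tendsto (fun θ => |v θ| + |e θ|) (nhdsWithin Tr (Set.Iio Tr)) Filter.atTop := by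
  have h' : v₀^2 + 2*e₀ - 1 ≥ 0 := by linarith
  set ts := tstar v₀ e₀ with hts
  have hts_pos : 0 < ts := tstar_pos v₀ e₀ h'
  -- uniqueness on the common interval
  have huniq : ∀ τ : ℝ, 0 ≤ τ → (τ : EReal) < T → τ < ts →
      v τ = vv v₀ e₀ τ ∧ e τ = ee v₀ e₀ τ := by
    intro τ h0 hτT hτs
    set g : ℝ → ℝ × ℝ := fun t => (v t, e t) with hg
    set gt : ℝ → ℝ × ℝ := fun t => (vv v₀ e₀ t, ee v₀ e₀ t) with hgt
    have hder : ∀ t ∈ Icc 0 τ, HasDerivAt g (F (g t)) t := by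
      intro t ht
      have htT : (t : EReal) < T := lt_of_le_of_lt (EReal.coe_le_coe_iff.2 ht.2) hτT
      obtain ⟨h1, h2⟩ := hsol t ht.1 htT
      exact h1.prodMk h2
    have hdert : ∀ t ∈ Icc 0 τ, HasDerivAt gt (F (gt t)) t := by
      intro t ht
      have hx := xx_pos v₀ e₀ ht.1 (lt_of_le_of_lt ht.2 hτs)
      exact (vv_deriv v₀ e₀ (ne_of_gt hx)).prodMk (ee_deriv v₀ e₀ (ne_of_gt hx))
    have hcg : ContinuousOn g (Icc 0 τ) :=
      fun t ht => (hder t ht).continuousAt.continuousWithinAt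
    have hcgt : ContinuousOn gt (Icc 0 τ) :=
      fun t ht => (hdert t ht).continuousAt.continuousWithinAt
    obtain ⟨C₁, hC₁⟩ := isCompact_Icc.exists_bound_of_continuousOn hcg
    obtain ⟨C₂, hC₂⟩ := isCompact_Icc.exists_bound_of_continuousOn hcgt
    set R := max C₁ C₂ with hRdef
    have hR : 0 ≤ R := le_trans (norm_nonneg (g 0))
      (le_trans (hC₁ 0 ⟨le_refl 0, h0⟩) (le_max_left _ _))
    have hlip : ∀ t : ℝ, LipschitzOnWith (Real.toNNReal (2*R+1)) ((fun (_ : ℝ) (p : ℝ × ℝ) => F p) t)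
        ((fun (_ : ℝ) => closedBall (0 : ℝ × ℝ) R) t) := fun _ => lipF R hR
    have heqon : EqOn g gt (Icc 0 τ) := by
      apply ODE_solution_unique_of_mem_Icc_right (fun t _ => hlip t) hcg
        (fun t ht => (hder t (Ico_subset_Icc_self ht)).hasDerivWithinAt)
        (fun t ht => mem_closedBall_zero_iff.2
          (le_trans (hC₁ t (Ico_subset_Icc_self ht)) (le_max_left _ _)))
        hcgt
        (fun t ht => (hdert t (Ico_subset_Icc_self ht)).hasDerivWithinAt)
        (fun t ht => mem_closedBall_zero_iff.2
          (le_trans (hC₂ t (Ico_subset_Icc_self ht)) (le_max_right _ _)))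
      show (v 0, e 0) = (vv v₀ e₀ 0, ee v₀ e₀ 0)
      rw [hv0, he0, vv0, ee0]
    have := heqon (right_mem_Icc.2 h0)
    exact ⟨congrArg Prod.fst this, congrArg Prod.snd this⟩
  -- T ≤ ts
  have hTle : T ≤ (ts : EReal) := by
    by_contra hlt
    push_neg at hlt
    have hcont : Tendsto v (nhdsWithin ts (Iio ts)) (nhds (v ts)) :=
      ((hsol ts (le_of_lt hts_pos) hlt).1.continuousAt.tendsto).mono_left
        (nhdsWithin_le_nhds (s := Iio ts))
    have h2 : Tendsto (fun θ => (v θ)^2) (nhdsWithin ts (Iio ts)) (nhds ((v ts)^2)) :=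
      hcont.pow 2
    have h3 : Tendsto (fun θ => (v θ)^2) (nhdsWithin ts (Iio ts)) atTop := by
      apply (vv_sq_tendsto v₀ e₀ h').congr'
      filter_upwards [eventually_mem v₀ e₀ h'] with θ hθ
      have hθT : (θ : EReal) < T := lt_trans (EReal.coe_lt_coe_iff.2 hθ.2) hlt
      rw [(huniq θ (le_of_lt hθ.1) hθT hθ.2).1]
    exact not_tendsto_nhds_of_tendsto_atTop h3 _ h2
  -- ts ≤ T
  have hTge : (ts : EReal) ≤ T := by
    by_contra hlt
    push_neg at hlt
    refine hmax (ts : EReal) (vv v₀ e₀) (ee v₀ e₀) hlt ?_ ?_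
    · intro θ h0 hθ
      have hθts : θ < ts := EReal.coe_lt_coe_iff.1 hθ
      have hx := xx_pos v₀ e₀ h0 hθts
      exact ⟨vv_deriv v₀ e₀ (ne_of_gt hx), ee_deriv v₀ e₀ (ne_of_gt hx)⟩
    · intro θ h0 hθ
      have hθts : θ < ts := EReal.coe_lt_coe_iff.1 (lt_trans hθ hlt)
      obtain ⟨a, b⟩ := huniq θ h0 hθ hθts
      exact ⟨a.symm, b.symm⟩
  have hTeq : T = (ts : EReal) := le_antisymm hTle hTge
  refine ⟨ts, hTeq, ?_⟩
  have habs : Tendsto (fun θ => |vv v₀ e₀ θ|) (nhdsWithin ts (Iio ts)) atTop := by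
    rw [Filter.tendsto_atTop]
    intro b
    have hb := (Filter.tendsto_atTop.1 (vv_sq_tendsto v₀ e₀ h')) (b^2)
    filter_upwards [hb] with θ hθ
    by_contra hc
    push_neg at hc
    nlinarith [abs_nonneg (vv v₀ e₀ θ), sq_abs (vv v₀ e₀ θ)]
  apply tendsto_atTop_mono' _ _ habs
  filter_upwards [eventually_mem v₀ e₀ h'] with θ hθ
  have hθT : (θ : EReal) < T := by rw [hTeq]; exact EReal.coe_lt_coe_iff.2 hθ.2
  rw [← (huniq θ (le_of_lt hθ.1) hθT hθ.2).1]
  have := abs_nonneg (e θ)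
  linarith
end

section
/- Let (v,e) be the solution of the system v′ = −v² − e, e′ = (1 − e) v with initial data v(0) = v₀, e(0) = e₀ satisfying v₀² + 2 e₀ − 1 < 0. Then the solution exists for all θ ∈ ℝ, remains bounded, and is periodic with period 2π: v(θ + 2π) = v(θ) and e(θ + 2π) = e(θ) for all θ. -/
/-- The solution of `v' = -v² - e`, `e' = (1 - e) v` with initial data
satisfying `v₀² + 2 e₀ - 1 < 0` exists for all `θ ∈ ℝ`, remains bounded, and is
`2π`-periodic. -/
theorem stmt3 (v₀ e₀ : ℝ) (h : v₀^2 + 2 * e₀ - 1 < 0) :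
    ∃ v e : ℝ → ℝ,
      (∀ θ : ℝ, HasDerivAt v (-(v θ)^2 - e θ) θ ∧ HasDerivAt e ((1 - e θ) * v θ) θ) ∧
      v 0 = v₀ ∧ e 0 = e₀ ∧
      (∃ M : ℝ, ∀ θ : ℝ, |v θ| + |e θ| ≤ M) ∧
      (∀ θ : ℝ, v (θ + 2 * Real.pi) = v θ ∧ e (θ + 2 * Real.pi) = e θ) := by
  have h1e : (0:ℝ) < 1 - e₀ := by nlinarith [sq_nonneg v₀]
  set α := e₀ / (1 - e₀) with hα
  set β := v₀ / (1 - e₀) with hβ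
  set q : ℝ → ℝ := fun θ => 1 + α * Real.cos θ + β * Real.sin θ with hq
  set r := Real.sqrt (α^2 + β^2) with hrdef
  have hr2 : α^2 + β^2 < 1 := by
    rw [hα, hβ, div_pow, div_pow, ← add_div, div_lt_one (by positivity)]
    nlinarith
  have hr0 : 0 ≤ r := Real.sqrt_nonneg _
  have hr1 : r < 1 := by
    rw [hrdef, show (1:ℝ) = Real.sqrt 1 by simp]
    exact Real.sqrt_lt_sqrt (by positivity) (by simpa using hr2)
  have key : ∀ x y θ : ℝ, |x * Real.cos θ + y * Real.sin θ| ≤ Real.sqrt (x^2 + y^2) := by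
    intro x y θ
    rw [← Real.sqrt_sq_eq_abs]
    apply Real.sqrt_le_sqrt
    nlinarith [Real.sin_sq_add_cos_sq θ, sq_nonneg (x * Real.sin θ - y * Real.cos θ)]
  have hq_lb : ∀ θ, 1 - r ≤ q θ := by
    intro θ
    have h1 := (abs_le.1 (key α β θ)).1
    simp only [hq]
    rw [hrdef] at *
    linarith
  have hδ : (0:ℝ) < 1 - r := by linarith
  have hqpos : ∀ θ, 0 < q θ := fun θ => lt_of_lt_of_le hδ (hq_lb θ)
  refine ⟨fun θ => (β * Real.cos θ - α * Real.sin θ) / q θ, fun θ => 1 - 1 / q θ, ?_, ?_, ?_, ?_, ?_⟩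
  · intro θ
    have hqθ := (hqpos θ).ne'
    have hqd : HasDerivAt q (β * Real.cos θ - α * Real.sin θ) θ := by
      have h1 : HasDerivAt (fun t => 1 + α * Real.cos t + β * Real.sin t)
          (0 + α * (-Real.sin θ) + β * Real.cos θ) θ :=
        ((hasDerivAt_const θ (1:ℝ)).add ((Real.hasDerivAt_cos θ).const_mul α)).add
          ((Real.hasDerivAt_sin θ).const_mul β)
      rw [hq]; convert h1 using 1; ring
    have hnd : HasDerivAt (fun t => β * Real.cos t - α * Real.sin t)
        (-(β * Real.sin θ) - α * Real.cos θ) θ := by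
      have h1 := ((Real.hasDerivAt_cos θ).const_mul β).sub ((Real.hasDerivAt_sin θ).const_mul α)
      exact h1.congr_deriv (by ring)
    constructor
    · have h2 := hnd.div hqd hqθ
      refine h2.congr_deriv ?_
      have hqθ' : 1 + α * Real.cos θ + β * Real.sin θ ≠ 0 := hqθ
      simp only [hq]
      field_simp
      ring
    · have h2 := (hasDerivAt_const θ (1:ℝ)).sub ((hasDerivAt_const θ (1:ℝ)).div hqd hqθ)
      refine h2.congr_deriv ?_
      have hqθ' : 1 + α * Real.cos θ + β * Real.sin θ ≠ 0 := hqθ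
      simp only [hq]
      field_simp
      ring
  · show (β * Real.cos 0 - α * Real.sin 0) / q 0 = v₀
    have : q 0 = 1 + α := by simp [hq]
    rw [this]
    rw [hα, hβ]
    field_simp
    simp
  · show 1 - 1 / q 0 = e₀
    have : q 0 = 1 + α := by simp [hq]
    rw [this, hα]
    field_simp
    ring
  · refine ⟨r / (1 - r) + (1 + 1 / (1 - r)), fun θ => ?_⟩
    have hql := hq_lb θ
    have hqp := hqpos θ
    have hv : |(β * Real.cos θ - α * Real.sin θ) / q θ| ≤ r / (1 - r) := by
      rw [abs_div, abs_of_pos hqp]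
      apply div_le_div₀ (by positivity) ?_ hδ hql
      have := key β (-α) θ
      rw [hrdef]
      calc |β * Real.cos θ - α * Real.sin θ| = |β * Real.cos θ + (-α) * Real.sin θ| := by ring_nf
        _ ≤ Real.sqrt (β^2 + (-α)^2) := key β (-α) θ
        _ = Real.sqrt (α^2 + β^2) := by ring_nf
    have he : |1 - 1 / q θ| ≤ 1 + 1 / (1 - r) := by
      rw [abs_le]
      have h1 : 1 / q θ ≤ 1 / (1 - r) := by
        apply one_div_le_one_div_of_le hδ hql
      have h2 : 0 < 1 / q θ := by positivity
      have h3 : 0 < 1 / (1 - r) := by positivity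
      constructor <;> linarith
    linarith
  · intro θ
    constructor
    · show (β * Real.cos (θ + 2 * Real.pi) - α * Real.sin (θ + 2 * Real.pi)) / q (θ + 2 * Real.pi) = _
      simp [hq, Real.cos_add_two_pi, Real.sin_add_two_pi]
    · show 1 - 1 / q (θ + 2 * Real.pi) = 1 - 1 / q θ
      simp [hq, Real.cos_add_two_pi, Real.sin_add_two_pi]
end

section
/- For every C ∈ (−1, 0), setting e₋ = 1 + (1 − √(1+C))/C and e₊ = 1 + (1 + √(1+C))/C, the definite integral ∫_{e₋}^{e₊} de / ((e − 1) √(C (e − 1)² − 2e + 1)) equals π. -/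
open intervalIntegral

set_option maxHeartbeats 1000000 in
lemma stmt4_aux (C s a b : ℝ) (hC1 : -1 < C) (hC0 : C < 0)
    (hs0 : 0 < s) (hs2 : s ^ 2 = 1 + C)
    (ha : a = 1 + (1 + s) / C) (hb : b = 1 + (1 - s) / C) :
    ∫ e in b..a, 1 / ((e - 1) * Real.sqrt (C * (e - 1)^2 - 2 * e + 1)) = Real.pi := by
  have hCne : C ≠ 0 := hC0.ne
  have hs1 : s < 1 := by nlinarith
  have hC' : C = s ^ 2 - 1 := by linarith
  subst hC'
  set f : ℝ → ℝ := fun e => 1 / ((e - 1) * Real.sqrt ((s ^ 2 - 1) * (e - 1)^2 - 2 * e + 1))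
    with hf
  have hab : a < b := by
    have h2 : (2*s)/(s^2-1) < 0 := div_neg_of_pos_of_neg (by linarith) hC0
    have h3 : a - b = (2*s)/(s^2-1) := by rw [ha, hb]; ring
    linarith
  have hb1 : b < 1 := by
    have h2 : (1-s)/(s^2-1) < 0 := div_neg_of_pos_of_neg (by linarith) hC0
    rw [hb]; linarith
  have hQ : ∀ e : ℝ, (s^2-1) * (e - 1)^2 - 2 * e + 1 = (-(s^2-1)) * ((b - e) * (e - a)) := by
    intro e
    rw [ha, hb]
    field_simp
    ring
  have hQpos : ∀ e, a < e → e < b → 0 < (s^2-1) * (e - 1)^2 - 2 * e + 1 := by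
    intro e h1 h2
    rw [hQ e]
    have hc : 0 < -(s^2-1) := by linarith
    have hbe : 0 < b - e := by linarith
    have hea : 0 < e - a := by linarith
    positivity
  obtain ⟨c, hc⟩ : ∃ c : ℝ, c = -(s ^ 2 - 1) := ⟨_, rfl⟩
  have hcpos : 0 < c := by rw [hc]; nlinarith
  have hQ' : ∀ e : ℝ, (s^2-1) * (e - 1)^2 - 2 * e + 1 = c * ((b - e) * (e - a)) := by
    intro e; rw [hQ e, hc]
  -- the antiderivative
  set F : ℝ → ℝ := fun e => Real.arcsin (e / ((e - 1) * s)) with hF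
  have hFderiv : ∀ e ∈ Set.Ioo a b, HasDerivAt F (f e) e := by
    intro e he
    have he1 : e - 1 < 0 := by have := he.2; linarith
    have he1' : e - 1 ≠ 0 := ne_of_lt he1
    have h2e : (1:ℝ) - e ≠ 0 := by intro h; apply he1'; linarith
    have hden : (e - 1) * s ≠ 0 := mul_ne_zero he1' hs0.ne'
    have hQp := hQpos e he.1 he.2
    have hsQ : 0 < Real.sqrt ((s^2-1) * (e - 1)^2 - 2 * e + 1) := Real.sqrt_pos.2 hQp
    have hg2 : 1 - (e / ((e - 1) * s))^2
        = ((s^2-1) * (e - 1)^2 - 2 * e + 1) / ((1 - e) * s)^2 := by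
      field_simp
      ring
    have hg2pos : 0 < 1 - (e / ((e - 1) * s))^2 := by
      rw [hg2]
      have h1e : 0 < 1 - e := by linarith
      positivity
    have hglt : (e / ((e - 1) * s))^2 < 1 := by linarith
    have hne1 : e / ((e - 1) * s) ≠ 1 := by
      intro h; rw [h] at hglt; norm_num at hglt
    have hnem1 : e / ((e - 1) * s) ≠ -1 := by
      intro h; rw [h] at hglt; norm_num at hglt
    have hd1 : HasDerivAt (fun x : ℝ => x / ((x - 1) * s))
        ((1 * ((e - 1) * s) - e * (1 * s)) / ((e - 1) * s)^2) e := by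
      exact (hasDerivAt_id e).div (((hasDerivAt_id e).sub_const 1).mul_const s) hden
    have hcomp := (Real.hasDerivAt_arcsin hnem1 hne1).comp e hd1
    have heq : 1 / Real.sqrt (1 - (e / ((e - 1) * s))^2) *
        ((1 * ((e - 1) * s) - e * (1 * s)) / ((e - 1) * s)^2) = f e := by
      rw [hg2, Real.sqrt_div hQp.le, Real.sqrt_sq (by nlinarith : (0:ℝ) ≤ (1 - e) * s)]
      show _ = 1 / ((e - 1) * Real.sqrt ((s ^ 2 - 1) * (e - 1)^2 - 2 * e + 1))
      field_simp
      ring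
    exact heq ▸ hcomp
  have hFcont : ContinuousOn F (Set.Icc a b) := by
    apply Real.continuous_arcsin.comp_continuousOn
    apply ContinuousOn.div continuousOn_id
    · fun_prop
    · intro e he
      have : e - 1 < 0 := by have := he.2; linarith
      exact mul_ne_zero (ne_of_lt this) hs0.ne'
  have hFb : F b = -(Real.pi / 2) := by
    have hbne : (1:ℝ) - s ≠ 0 := by linarith
    have hkey : b / ((b - 1) * s) = -1 := by
      rw [hb]
      field_simp
      linear_combination (-s) * (inv_mul_cancel₀ hbne)
    rw [hF]; simp only [hkey, Real.arcsin_neg_one]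
  have hFa : F a = Real.pi / 2 := by
    have hane : (1:ℝ) + s ≠ 0 := by linarith
    have hkey : a / ((a - 1) * s) = 1 := by
      rw [ha]
      field_simp
      linear_combination s * (inv_mul_cancel₀ hane)
    rw [hF]; simp only [hkey, Real.arcsin_one]
  -- integrability
  have hfmeas : ∀ u v : ℝ, MeasureTheory.AEStronglyMeasurable f
      (MeasureTheory.volume.restrict (Set.uIoc u v)) := by
    intro u v
    apply Measurable.aestronglyMeasurable
    rw [hf]
    fun_prop
  set m : ℝ := (a + b) / 2 with hm
  have ham : a < m := by rw [hm]; linarith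
  have hmb : m < b := by rw [hm]; linarith
  have hint1 : IntervalIntegrable f MeasureTheory.volume a m := by
    set K : ℝ := ((1 - b) * Real.sqrt (c * (b - m)))⁻¹ with hK
    have hcbm : (0:ℝ) < c * (b - m) := by
      have h4 : 0 < b - m := by linarith
      positivity
    have hsc : 0 < Real.sqrt (c * (b - m)) := Real.sqrt_pos.2 hcbm
    have h1b : (0:ℝ) < 1 - b := by linarith
    have hKpos : 0 < (1 - b) * Real.sqrt (c * (b - m)) := by positivity
    have hbase : IntervalIntegrable (fun x : ℝ => K * (x - a) ^ (-(1/2) : ℝ))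
        MeasureTheory.volume a m := by
      have h := intervalIntegrable_rpow' (a := 0) (b := m - a) (r := -(1/2)) (by norm_num)
      have h2 := h.comp_sub_right a
      simpa using h2.const_mul K
    apply hbase.mono_fun (hfmeas a m)
    rw [Set.uIoc_of_le ham.le]
    refine (MeasureTheory.ae_restrict_iff' measurableSet_Ioc).2 (Filter.Eventually.of_forall ?_)
    intro x hx
    have hxa : 0 < x - a := by linarith [hx.1]
    have hxb : x < b := lt_of_le_of_lt hx.2 hmb
    have hQp := hQpos x hx.1 hxb
    have hsQ : 0 < Real.sqrt ((s^2-1) * (x - 1)^2 - 2 * x + 1) := Real.sqrt_pos.2 hQp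
    have hx1 : x - 1 < 0 := by linarith
    have hle : c * (b - m) * (x - a) ≤ (s^2-1) * (x - 1)^2 - 2 * x + 1 := by
      rw [hQ' x]
      nlinarith [mul_nonneg (mul_nonneg hcpos.le hxa.le) (sub_nonneg.2 hx.2)]
    have h3 : Real.sqrt (c * (b - m)) * Real.sqrt (x - a)
        ≤ Real.sqrt ((s^2-1) * (x - 1)^2 - 2 * x + 1) := by
      rw [← Real.sqrt_mul hcbm.le]
      exact Real.sqrt_le_sqrt hle
    have hnorm : ‖f x‖ = ((1 - x) * Real.sqrt ((s^2-1) * (x - 1)^2 - 2 * x + 1))⁻¹ := by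
      rw [hf]
      simp only [one_div, norm_inv, Real.norm_eq_abs]
      rw [abs_mul, abs_of_neg hx1, abs_of_pos hsQ]
      ring_nf
    show ‖f x‖ ≤ ‖K * (x - a) ^ (-(1/2) : ℝ)‖
    rw [hnorm]
    have hrpow : (x - a) ^ (-(1/2) : ℝ) = (Real.sqrt (x - a))⁻¹ := by
      rw [Real.rpow_neg hxa.le, Real.sqrt_eq_rpow]
    have hsxa : 0 < Real.sqrt (x - a) := Real.sqrt_pos.2 hxa
    have hRHS : ‖K * (x - a) ^ (-(1/2) : ℝ)‖
        = ((1 - b) * Real.sqrt (c * (b - m)) * Real.sqrt (x - a))⁻¹ := by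
      rw [Real.norm_eq_abs, abs_mul, hrpow, hK, abs_of_pos (by positivity),
        abs_of_pos (by positivity : (0:ℝ) < (Real.sqrt (x - a))⁻¹)]
      rw [← mul_inv]
    rw [hRHS]
    apply inv_anti₀
    · positivity
    · calc (1 - b) * Real.sqrt (c * (b - m)) * Real.sqrt (x - a)
          ≤ (1 - x) * (Real.sqrt (c * (b - m)) * Real.sqrt (x - a)) := by
            have h1x : 1 - b ≤ 1 - x := by linarith
            rw [mul_assoc]
            exact mul_le_mul_of_nonneg_right h1x (by positivity)
        _ ≤ (1 - x) * Real.sqrt ((s^2-1) * (x - 1)^2 - 2 * x + 1) := by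
            have h1x : 0 < 1 - x := by linarith
            exact mul_le_mul_of_nonneg_left h3 h1x.le
  have hint2 : IntervalIntegrable f MeasureTheory.volume m b := by
    set K : ℝ := ((1 - b) * Real.sqrt (c * (m - a)))⁻¹ with hK
    have hcma : (0:ℝ) < c * (m - a) := by
      have h4 : 0 < m - a := by linarith
      positivity
    have hsc : 0 < Real.sqrt (c * (m - a)) := Real.sqrt_pos.2 hcma
    have h1b : (0:ℝ) < 1 - b := by linarith
    have hbase : IntervalIntegrable (fun x : ℝ => K * (b - x) ^ (-(1/2) : ℝ))
        MeasureTheory.volume m b := by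
      have h := intervalIntegrable_rpow' (a := 0) (b := b - m) (r := -(1/2)) (by norm_num)
      have h2 := (h.comp_sub_left b).symm
      have h3 : b - (b - m) = m := by ring
      rw [h3, sub_zero] at h2
      exact h2.const_mul K
    apply hbase.mono_fun (hfmeas m b)
    rw [Set.uIoc_of_le hmb.le]
    refine (MeasureTheory.ae_restrict_iff' measurableSet_Ioc).2 (Filter.Eventually.of_forall ?_)
    intro x hx
    rcases eq_or_lt_of_le hx.2 with hxb | hxb
    · have hQ0 : (s^2-1) * (x - 1)^2 - 2 * x + 1 = 0 := by rw [hQ x, hxb]; ring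
      have hz : f x = 0 := by rw [hf]; simp [hQ0]
      show ‖f x‖ ≤ ‖K * (b - x) ^ (-(1/2) : ℝ)‖
      rw [hz]
      simp only [norm_zero, Real.norm_eq_abs]
      positivity
    · have hxa : a < x := lt_trans ham hx.1
      have hbx : 0 < b - x := by linarith
      have hQp := hQpos x hxa hxb
      have hsQ : 0 < Real.sqrt ((s^2-1) * (x - 1)^2 - 2 * x + 1) := Real.sqrt_pos.2 hQp
      have hx1 : x - 1 < 0 := by linarith
      have hle : c * (m - a) * (b - x) ≤ (s^2-1) * (x - 1)^2 - 2 * x + 1 := by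
        rw [hQ' x]
        nlinarith [mul_nonneg (mul_nonneg hcpos.le hbx.le) (sub_nonneg.2 hx.1.le)]
      have h3 : Real.sqrt (c * (m - a)) * Real.sqrt (b - x)
          ≤ Real.sqrt ((s^2-1) * (x - 1)^2 - 2 * x + 1) := by
        rw [← Real.sqrt_mul hcma.le]
        exact Real.sqrt_le_sqrt hle
      have hnorm : ‖f x‖ = ((1 - x) * Real.sqrt ((s^2-1) * (x - 1)^2 - 2 * x + 1))⁻¹ := by
        rw [hf]
        simp only [one_div, norm_inv, Real.norm_eq_abs]
        rw [abs_mul, abs_of_neg hx1, abs_of_pos hsQ]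
        ring_nf
      show ‖f x‖ ≤ ‖K * (b - x) ^ (-(1/2) : ℝ)‖
      rw [hnorm]
      have hrpow : (b - x) ^ (-(1/2) : ℝ) = (Real.sqrt (b - x))⁻¹ := by
        rw [Real.rpow_neg hbx.le, Real.sqrt_eq_rpow]
      have hsbx : 0 < Real.sqrt (b - x) := Real.sqrt_pos.2 hbx
      have hRHS : ‖K * (b - x) ^ (-(1/2) : ℝ)‖
          = ((1 - b) * Real.sqrt (c * (m - a)) * Real.sqrt (b - x))⁻¹ := by
        rw [Real.norm_eq_abs, abs_mul, hrpow, hK, abs_of_pos (by positivity),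
          abs_of_pos (by positivity : (0:ℝ) < (Real.sqrt (b - x))⁻¹)]
        rw [← mul_inv]
      rw [hRHS]
      apply inv_anti₀
      · positivity
      · calc (1 - b) * Real.sqrt (c * (m - a)) * Real.sqrt (b - x)
            ≤ (1 - x) * (Real.sqrt (c * (m - a)) * Real.sqrt (b - x)) := by
              have h1x : 1 - b ≤ 1 - x := by linarith
              rw [mul_assoc]
              exact mul_le_mul_of_nonneg_right h1x (by positivity)
          _ ≤ (1 - x) * Real.sqrt ((s^2-1) * (x - 1)^2 - 2 * x + 1) := by
              have h1x : 0 < 1 - x := by linarith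
              exact mul_le_mul_of_nonneg_left h3 h1x.le
  have hint : IntervalIntegrable f MeasureTheory.volume a b := hint1.trans hint2
  have key : ∫ e in a..b, f e = F b - F a :=
    intervalIntegral.integral_eq_sub_of_hasDerivAt_of_le hab.le hFcont hFderiv hint
  rw [intervalIntegral.integral_symm, key, hFb, hFa]
  ring

/-- For `C ∈ (-1,0)`, with `e₋ = 1 + (1 - √(1+C))/C` and
`e₊ = 1 + (1 + √(1+C))/C`, the integral
`∫_{e₋}^{e₊} de / ((e-1) √(C(e-1)² - 2e + 1))` equals `π`. -/
theorem stmt4 (C : ℝ) (hC : C ∈ Set.Ioo (-1 : ℝ) 0) :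
    ∫ e in (1 + (1 - Real.sqrt (1 + C)) / C)..(1 + (1 + Real.sqrt (1 + C)) / C),
      1 / ((e - 1) * Real.sqrt (C * (e - 1)^2 - 2 * e + 1)) = Real.pi := by
  obtain ⟨hC1, hC0⟩ := hC
  have h1C : (0:ℝ) < 1 + C := by linarith
  exact stmt4_aux C (Real.sqrt (1 + C)) _ _ hC1 hC0 (Real.sqrt_pos.2 h1C)
    (Real.sq_sqrt h1C.le) rfl rfl
end

section
/- Let s ∈ ℝ with |s| < 1 and θ₀ ∈ ℝ. Then the functions W(θ) = s cos(θ + θ₀)/(1 + s sin(θ + θ₀)) and D(θ) = s sin(θ + θ₀)/(1 + s sin(θ + θ₀)) are well defined and differentiable for all θ ∈ ℝ, and satisfy the system W′ = −W² − D, D′ = (1 − D) W for all θ ∈ ℝ. -/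
/-- For `|s| < 1`, the functions
`W(θ) = s cos(θ+θ₀)/(1 + s sin(θ+θ₀))` and `D(θ) = s sin(θ+θ₀)/(1 + s sin(θ+θ₀))`
are well defined and differentiable on all of `ℝ` and satisfy
`W' = -W² - D`, `D' = (1 - D) W`. -/
theorem stmt6 (s θ₀ : ℝ) (hs : |s| < 1) :
    ∀ θ : ℝ,
      1 + s * Real.sin (θ + θ₀) ≠ 0 ∧
      HasDerivAt (fun t => s * Real.cos (t + θ₀) / (1 + s * Real.sin (t + θ₀)))
        (-(s * Real.cos (θ + θ₀) / (1 + s * Real.sin (θ + θ₀)))^2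
          - s * Real.sin (θ + θ₀) / (1 + s * Real.sin (θ + θ₀))) θ ∧
      HasDerivAt (fun t => s * Real.sin (t + θ₀) / (1 + s * Real.sin (t + θ₀)))
        ((1 - s * Real.sin (θ + θ₀) / (1 + s * Real.sin (θ + θ₀)))
          * (s * Real.cos (θ + θ₀) / (1 + s * Real.sin (θ + θ₀)))) θ := by
  intro θ
  have hne : ∀ t : ℝ, 1 + s * Real.sin (t + θ₀) ≠ 0 := by
    intro t
    have h1 : |s * Real.sin (t + θ₀)| < 1 := by
      rw [abs_mul]
      calc |s| * |Real.sin (t + θ₀)| ≤ |s| * 1 :=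
            mul_le_mul_of_nonneg_left (Real.abs_sin_le_one _) (abs_nonneg _)
        _ = |s| := mul_one _
        _ < 1 := hs
    have := (abs_lt.mp h1).1
    linarith
  have hv : ∀ t : ℝ, HasDerivAt (fun t => 1 + s * Real.sin (t + θ₀))
      (s * Real.cos (t + θ₀)) t := by
    intro t
    have h0 : HasDerivAt (fun t : ℝ => t + θ₀) 1 t :=
      (hasDerivAt_id t).add_const θ₀
    have := ((Real.hasDerivAt_sin (t + θ₀)).comp t h0).const_mul s
    simpa using this.const_add 1
  have hu : ∀ t : ℝ, HasDerivAt (fun t => s * Real.cos (t + θ₀))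
      (s * -Real.sin (t + θ₀)) t := by
    intro t
    have h0 : HasDerivAt (fun t : ℝ => t + θ₀) 1 t :=
      (hasDerivAt_id t).add_const θ₀
    have := ((Real.hasDerivAt_cos (t + θ₀)).comp t h0).const_mul s
    simpa using this
  have hw : ∀ t : ℝ, HasDerivAt (fun t => s * Real.sin (t + θ₀))
      (s * Real.cos (t + θ₀)) t := by
    intro t
    have h0 : HasDerivAt (fun t : ℝ => t + θ₀) 1 t :=
      (hasDerivAt_id t).add_const θ₀
    have := ((Real.hasDerivAt_sin (t + θ₀)).comp t h0).const_mul s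
    simpa using this
  have hpyth := Real.sin_sq_add_cos_sq (θ + θ₀)
  refine ⟨hne θ, ?_, ?_⟩
  · have := (hu θ).fun_div (hv θ) (hne θ)
    have hd := hne θ
    refine this.congr_deriv ?_
    field_simp
    nlinarith [hpyth]
  · have := (hw θ).fun_div (hv θ) (hne θ)
    have hd := hne θ
    refine this.congr_deriv ?_
    field_simp
end

section
/- For C₁ > 2, let P₊ = √(C₁² − 4)/2 and define the period T(C₁) = 2 ∫_{−P₊}^{P₊} dP / √(C₁ − 2√(1+P²)). Then T(C₁) > 2π for every C₁ > 2, and T(C₁) → 2π as C₁ → 2⁺. -/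
open intervalIntegral Filter MeasureTheory Set

lemma meas_aux (f : ℝ → ℝ) (hf : Continuous f) :
    Measurable fun x => 1 / Real.sqrt (f x) := by
  simp only [one_div]
  exact hf.sqrt.measurable.inv

lemma integrable_unit_right :
    IntervalIntegrable (fun x : ℝ => 1 / Real.sqrt (1 - x^2)) volume 0 1 := by
  have hmaj : IntervalIntegrable (fun x : ℝ => (1 - x) ^ (-(1/2) : ℝ)) volume 0 1 := by
    have h := (intervalIntegrable_rpow' (a := 0) (b := 1) (r := -(1/2)) (by norm_num)).comp_sub_left 1
    simpa using h.symm
  apply hmaj.mono_fun ((meas_aux _ (by continuity)).aestronglyMeasurable)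
  filter_upwards [ae_restrict_mem measurableSet_uIoc] with x hx
  rw [Set.uIoc_of_le (by norm_num : (0:ℝ) ≤ 1)] at hx
  obtain ⟨hx0, hx1⟩ := hx
  have h1 : (0:ℝ) ≤ 1 - x := by linarith
  have h2 : 1 - x ≤ 1 - x^2 := by nlinarith
  have hrpow : (1 - x) ^ (-(1/2) : ℝ) = 1 / Real.sqrt (1 - x) := by
    rw [Real.rpow_neg h1, Real.sqrt_eq_rpow]
    norm_num
  rw [Real.norm_eq_abs, Real.norm_eq_abs, hrpow,
    abs_of_nonneg (by positivity), abs_of_nonneg (by positivity)]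
  rcases eq_or_lt_of_le h1 with h | h
  · have hx1 : x = 1 := by linarith
    subst hx1
    norm_num
  · exact one_div_le_one_div_of_le (Real.sqrt_pos.mpr h) (Real.sqrt_le_sqrt h2)

lemma integrable_unit :
    IntervalIntegrable (fun x : ℝ => 1 / Real.sqrt (1 - x^2)) volume (-1) 1 := by
  have h := (IntervalIntegrable.iff_comp_neg).mp integrable_unit_right
  simp only [neg_zero, neg_neg, even_two.neg_pow] at h
  exact (h.symm).trans integrable_unit_right

lemma integral_unit : ∫ x in (-1:ℝ)..1, 1 / Real.sqrt (1 - x^2) = Real.pi := by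
  have h := intervalIntegral.integral_eq_sub_of_hasDeriv_right_of_le
    (by norm_num : (-1:ℝ) ≤ 1)
    (Real.continuous_arcsin.continuousOn)
    (fun x hx => (Real.hasDerivAt_arcsin (ne_of_gt hx.1) (ne_of_lt hx.2)).hasDerivWithinAt)
    integrable_unit
  rw [h, Real.arcsin_one, Real.arcsin_neg_one]
  ring

lemma scale_eq {a : ℝ} (ha : 0 < a) (x : ℝ) :
    1 / Real.sqrt (a^2 - x^2) = (1/a) * (1 / Real.sqrt (1 - (x/a)^2)) := by
  have h1 : a^2 - x^2 = a^2 * (1 - (x/a)^2) := by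
    field_simp
  rw [h1, Real.sqrt_mul (sq_nonneg a), Real.sqrt_sq ha.le]
  ring

lemma integrable_circle {a : ℝ} (ha : 0 < a) :
    IntervalIntegrable (fun x => 1 / Real.sqrt (a^2 - x^2)) volume (-a) a := by
  have h := (integrable_unit.comp_mul_right (c := 1/a)).const_mul (1/a)
  have hb : (-1 : ℝ) / (1/a) = -a := by field_simp
  have hb' : (1 : ℝ) / (1/a) = a := by field_simp
  rw [hb, hb'] at h
  refine IntervalIntegrable.congr_ae h ?_
  refine Filter.Eventually.of_forall fun x => ?_
  simp only
  rw [scale_eq ha x, div_eq_mul_inv x a]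
  ring

lemma integral_circle {a : ℝ} (ha : 0 < a) :
    ∫ x in (-a)..a, 1 / Real.sqrt (a^2 - x^2) = Real.pi := by
  have h : ∀ x, 1 / Real.sqrt (a^2 - x^2) = (1/a) * (1 / Real.sqrt (1 - (x/a)^2)) :=
    scale_eq ha
  simp_rw [h]
  rw [intervalIntegral.integral_const_mul]
  rw [intervalIntegral.integral_comp_div (c := a) (f := fun y => 1 / Real.sqrt (1 - y^2))
    (ne_of_gt ha)]
  rw [neg_div, div_self (ne_of_gt ha), integral_unit, smul_eq_mul]
  field_simp

section core
variable {C₁ : ℝ}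

lemma key_bounds (hC : 2 < C₁) {x : ℝ} (hx : x^2 ≤ (Real.sqrt (C₁^2-4)/2)^2) :
    Real.sqrt (C₁+2)/2 * (1 / Real.sqrt ((Real.sqrt (C₁^2-4)/2)^2 - x^2))
      ≤ 1 / Real.sqrt (C₁ - 2 * Real.sqrt (1 + x^2)) ∧
    1 / Real.sqrt (C₁ - 2 * Real.sqrt (1 + x^2))
      ≤ Real.sqrt (2*C₁)/2 * (1 / Real.sqrt ((Real.sqrt (C₁^2-4)/2)^2 - x^2)) := by
  set a : ℝ := Real.sqrt (C₁^2-4)/2 with ha_def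
  have hC0 : (0:ℝ) < C₁ := by linarith
  have hC4 : (0:ℝ) < C₁^2 - 4 := by nlinarith
  have ha2 : a^2 = (C₁^2-4)/4 := by
    rw [ha_def, div_pow, Real.sq_sqrt hC4.le]
    norm_num
  set s : ℝ := Real.sqrt (1 + x^2) with hs_def
  have hs1 : 1 ≤ s := by
    rw [hs_def]
    nlinarith [Real.sq_sqrt (by positivity : (0:ℝ) ≤ 1 + x^2),
      Real.sqrt_nonneg (1 + x^2)]
  have hs2 : s^2 = 1 + x^2 := Real.sq_sqrt (by positivity)
  have h2s : 2*s ≤ C₁ := by nlinarith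
  have hd0 : 0 ≤ C₁ - 2*s := by linarith
  have hprod : (C₁ - 2*s) * (C₁ + 2*s) = 4 * (a^2 - x^2) := by
    rw [ha2]; nlinarith
  -- identity
  have hid : Real.sqrt (C₁ - 2*s) * Real.sqrt (C₁ + 2*s) = 2 * Real.sqrt (a^2 - x^2) := by
    rw [← Real.sqrt_mul hd0, hprod, Real.sqrt_mul (by norm_num : (0:ℝ) ≤ 4),
      show Real.sqrt 4 = 2 by
        rw [show (4:ℝ) = 2^2 by norm_num, Real.sqrt_sq (by norm_num : (0:ℝ) ≤ 2)]]
  have hlow : Real.sqrt (C₁+2) ≤ Real.sqrt (C₁ + 2*s) :=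
    Real.sqrt_le_sqrt (by linarith)
  have hhigh : Real.sqrt (C₁ + 2*s) ≤ Real.sqrt (2*C₁) :=
    Real.sqrt_le_sqrt (by linarith)
  rcases eq_or_lt_of_le hx with heq | hlt
  · -- boundary: both sides zero
    have hxa : a^2 - x^2 = 0 := by linarith
    have hseq : s = C₁/2 := by
      rw [hs_def, show 1 + x^2 = (C₁/2)^2 by nlinarith]
      exact Real.sqrt_sq (by linarith)
    have hdeq : C₁ - 2*s = 0 := by rw [hseq]; ring
    rw [hxa, hdeq, Real.sqrt_zero]
    norm_num
  · -- interior
    have hw : 0 < Real.sqrt (a^2 - x^2) := Real.sqrt_pos.mpr (by linarith)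
    have hdpos : 0 < C₁ - 2*s := by nlinarith
    have hsd : 0 < Real.sqrt (C₁ - 2*s) := Real.sqrt_pos.mpr hdpos
    constructor
    · have hform : Real.sqrt (C₁+2)/2 * (1 / Real.sqrt (a^2 - x^2))
          = Real.sqrt (C₁+2) / (2 * Real.sqrt (a^2 - x^2)) := by
        field_simp
      rw [hform, div_le_div_iff₀ (by positivity) hsd]
      calc Real.sqrt (C₁+2) * Real.sqrt (C₁ - 2*s)
          ≤ Real.sqrt (C₁ + 2*s) * Real.sqrt (C₁ - 2*s) :=
            mul_le_mul_of_nonneg_right hlow hsd.le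
        _ = 2 * Real.sqrt (a^2 - x^2) := by rw [mul_comm]; exact hid
        _ = 1 * (2 * Real.sqrt (a^2 - x^2)) := by ring
    · have hform : Real.sqrt (2*C₁)/2 * (1 / Real.sqrt (a^2 - x^2))
          = Real.sqrt (2*C₁) / (2 * Real.sqrt (a^2 - x^2)) := by
        field_simp
      rw [hform, div_le_div_iff₀ hsd (by positivity)]
      calc 1 * (2 * Real.sqrt (a^2 - x^2))
          = Real.sqrt (C₁ - 2*s) * Real.sqrt (C₁ + 2*s) := by rw [hid]; ring
        _ ≤ Real.sqrt (C₁ - 2*s) * Real.sqrt (2*C₁) :=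
            mul_le_mul_of_nonneg_left hhigh hsd.le
        _ = Real.sqrt (2*C₁) * Real.sqrt (C₁ - 2*s) := by ring

lemma period_bounds (hC : 2 < C₁) :
    Real.sqrt (C₁+2) * Real.pi ≤
      (2 * ∫ P in (-(Real.sqrt (C₁^2 - 4) / 2))..(Real.sqrt (C₁^2 - 4) / 2),
          1 / Real.sqrt (C₁ - 2 * Real.sqrt (1 + P^2))) ∧
    (2 * ∫ P in (-(Real.sqrt (C₁^2 - 4) / 2))..(Real.sqrt (C₁^2 - 4) / 2),
          1 / Real.sqrt (C₁ - 2 * Real.sqrt (1 + P^2))) ≤ Real.sqrt (2*C₁) * Real.pi := by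
  set a : ℝ := Real.sqrt (C₁^2-4)/2 with ha_def
  have hC4 : (0:ℝ) < C₁^2 - 4 := by nlinarith
  have ha : 0 < a := by rw [ha_def]; positivity
  have hxsq : ∀ x ∈ Icc (-a) a, x^2 ≤ a^2 := by
    intro x hx
    exact sq_le_sq' hx.1 hx.2
  have hL : IntervalIntegrable (fun x => Real.sqrt (C₁+2)/2 * (1 / Real.sqrt (a^2 - x^2)))
      volume (-a) a := (integrable_circle ha).const_mul _
  have hU : IntervalIntegrable (fun x => Real.sqrt (2*C₁)/2 * (1 / Real.sqrt (a^2 - x^2)))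
      volume (-a) a := (integrable_circle ha).const_mul _
  have hfmeas : Measurable (fun x => 1 / Real.sqrt (C₁ - 2 * Real.sqrt (1 + x^2))) := by
    apply meas_aux
    continuity
  have hmono : ∀ x ∈ Icc (-a) a,
      1 / Real.sqrt (C₁ - 2 * Real.sqrt (1 + x^2))
        ≤ Real.sqrt (2*C₁)/2 * (1 / Real.sqrt (a^2 - x^2)) :=
    fun x hx => (key_bounds hC (hxsq x hx)).2
  have hmono' : ∀ x ∈ Icc (-a) a,
      Real.sqrt (C₁+2)/2 * (1 / Real.sqrt (a^2 - x^2))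
        ≤ 1 / Real.sqrt (C₁ - 2 * Real.sqrt (1 + x^2)) :=
    fun x hx => (key_bounds hC (hxsq x hx)).1
  have hfint : IntervalIntegrable (fun x => 1 / Real.sqrt (C₁ - 2 * Real.sqrt (1 + x^2)))
      volume (-a) a := by
    apply hU.mono_fun hfmeas.aestronglyMeasurable
    filter_upwards [ae_restrict_mem measurableSet_uIoc] with x hx
    have hx' : x ∈ Icc (-a) a := by
      rw [Set.uIoc_of_le (by linarith : -a ≤ a)] at hx
      exact ⟨hx.1.le, hx.2⟩
    rw [Real.norm_eq_abs, Real.norm_eq_abs,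
      abs_of_nonneg (by positivity), abs_of_nonneg (by positivity)]
    exact hmono x hx'
  have hIL : ∫ x in (-a)..a, Real.sqrt (C₁+2)/2 * (1 / Real.sqrt (a^2 - x^2))
      = Real.sqrt (C₁+2)/2 * Real.pi := by
    rw [intervalIntegral.integral_const_mul, integral_circle ha]
  have hIU : ∫ x in (-a)..a, Real.sqrt (2*C₁)/2 * (1 / Real.sqrt (a^2 - x^2))
      = Real.sqrt (2*C₁)/2 * Real.pi := by
    rw [intervalIntegral.integral_const_mul, integral_circle ha]
  have h1 := intervalIntegral.integral_mono_on (by linarith : -a ≤ a) hL hfint hmono'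
  have h2 := intervalIntegral.integral_mono_on (by linarith : -a ≤ a) hfint hU hmono
  rw [hIL] at h1
  rw [hIU] at h2
  constructor <;> linarith

end core

/-- For `C₁ > 2`, with `P₊ = √(C₁² - 4)/2`, the period
`T(C₁) = 2 ∫_{-P₊}^{P₊} dP/√(C₁ - 2√(1+P²))` satisfies `T(C₁) > 2π`, and
`T(C₁) → 2π` as `C₁ → 2⁺`. -/
theorem stmt8 :
    (∀ C₁ : ℝ, 2 < C₁ →
      2 * Real.pi <
        2 * ∫ P in (-(Real.sqrt (C₁^2 - 4) / 2))..(Real.sqrt (C₁^2 - 4) / 2),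
          1 / Real.sqrt (C₁ - 2 * Real.sqrt (1 + P^2))) ∧
    Tendsto
      (fun C₁ : ℝ =>
        2 * ∫ P in (-(Real.sqrt (C₁^2 - 4) / 2))..(Real.sqrt (C₁^2 - 4) / 2),
          1 / Real.sqrt (C₁ - 2 * Real.sqrt (1 + P^2)))
      (nhdsWithin 2 (Set.Ioi 2)) (nhds (2 * Real.pi)) := by
  constructor
  · intro C₁ hC
    have h := (period_bounds hC).1
    have h2 : (2:ℝ) < Real.sqrt (C₁ + 2) := by
      have : Real.sqrt 4 < Real.sqrt (C₁ + 2) :=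
        Real.sqrt_lt_sqrt (by norm_num) (by linarith)
      rwa [show (4:ℝ) = 2^2 by norm_num, Real.sqrt_sq (by norm_num : (0:ℝ) ≤ 2)] at this
    nlinarith [Real.pi_pos]
  · have hlowT : Tendsto (fun C₁ : ℝ => Real.sqrt (C₁+2) * Real.pi)
        (nhdsWithin 2 (Set.Ioi 2)) (nhds (2 * Real.pi)) := by
      have hc : ContinuousAt (fun C₁ : ℝ => Real.sqrt (C₁+2) * Real.pi) 2 := by
        fun_prop
      have := hc.tendsto.mono_left (nhdsWithin_le_nhds (s := Set.Ioi (2:ℝ)))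
      simpa [show Real.sqrt (2+2) = 2 by
        rw [show (2:ℝ)+2 = 2^2 by norm_num, Real.sqrt_sq (by norm_num : (0:ℝ) ≤ 2)]]
        using this
    have hupT : Tendsto (fun C₁ : ℝ => Real.sqrt (2*C₁) * Real.pi)
        (nhdsWithin 2 (Set.Ioi 2)) (nhds (2 * Real.pi)) := by
      have hc : ContinuousAt (fun C₁ : ℝ => Real.sqrt (2*C₁) * Real.pi) 2 := by
        fun_prop
      have := hc.tendsto.mono_left (nhdsWithin_le_nhds (s := Set.Ioi (2:ℝ)))
      simpa [show Real.sqrt (2*2) = 2 by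
        rw [show (2:ℝ)*2 = 2^2 by norm_num, Real.sqrt_sq (by norm_num : (0:ℝ) ≤ 2)]]
        using this
    refine tendsto_of_tendsto_of_tendsto_of_le_of_le' hlowT hupT ?_ ?_
    · filter_upwards [self_mem_nhdsWithin] with C₁ hC
      exact (period_bounds hC).1
    · filter_upwards [self_mem_nhdsWithin] with C₁ hC
      exact (period_bounds hC).2
end

section
/- Let (P, E, p, e) : I → ℝ⁴ be a differentiable solution on an interval I of the extended characteristic system P′ = −E, E′ = P/√(1+P²), p′ = −e − p² (1+P²)^{−3/2}, e′ = (1−e) p (1+P²)^{−3/2}, and suppose p(θ) ≠ 0 for all θ ∈ I. Then the functions u = e/p and λ = (1−e)/p satisfy u′ = u² + K and λ′ = λ u on I, where K(θ) = (1 + P(θ)²)^{−3/2}. -/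
/-- Along a differentiable solution `(P, E, p, e)` of the extended
characteristic system `P' = -E`, `E' = P/√(1+P²)`, `p' = -e - p²(1+P²)^{-3/2}`,
`e' = (1-e) p (1+P²)^{-3/2}` with `p ≠ 0`, the functions `u = e/p` and
`λ = (1-e)/p` satisfy `u' = u² + K` and `λ' = λ u`, where `K = (1+P²)^{-3/2}`. -/
theorem stmt14 (I : Set ℝ) (P E p e : ℝ → ℝ)
    (hP : ∀ θ ∈ I, HasDerivAt P (-(E θ)) θ)
    (hE : ∀ θ ∈ I, HasDerivAt E (P θ / Real.sqrt (1 + (P θ)^2)) θ)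
    (hp : ∀ θ ∈ I, HasDerivAt p (-(e θ) - (p θ)^2 / (Real.sqrt (1 + (P θ)^2))^3) θ)
    (he : ∀ θ ∈ I, HasDerivAt e ((1 - e θ) * p θ / (Real.sqrt (1 + (P θ)^2))^3) θ)
    (hne : ∀ θ ∈ I, p θ ≠ 0) :
    ∀ θ ∈ I,
      HasDerivAt (fun t => e t / p t)
        ((e θ / p θ)^2 + 1 / (Real.sqrt (1 + (P θ)^2))^3) θ ∧
      HasDerivAt (fun t => (1 - e t) / p t)
        (((1 - e θ) / p θ) * (e θ / p θ)) θ := by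
  intro θ hθ
  have hs : Real.sqrt (1 + (P θ)^2) > 0 := Real.sqrt_pos.mpr (by positivity)
  have hs3 : (Real.sqrt (1 + (P θ)^2))^3 ≠ 0 := by positivity
  have hpθ := hne θ hθ
  constructor
  · have h : HasDerivAt (fun t => e t / p t) _ θ := (he θ hθ).div (hp θ hθ) hpθ
    convert h using 1
    field_simp
    ring
  · have h : HasDerivAt (fun t => (1 - e t) / p t) _ θ := ((hasDerivAt_const θ (1:ℝ)).sub (he θ hθ)).div (hp θ hθ) hpθ
    convert h using 1
    simp only [Pi.sub_apply]
    field_simp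
    ring
end

section
/- Let w ∈ ℝ and let (𝒫, ℰ) : I → ℝ² be a differentiable solution on an interval I of the traveling-wave system (−w + 𝒫/√(1+𝒫²)) 𝒫′ = −ℰ, (−w + 𝒫/√(1+𝒫²)) ℰ′ = 𝒫/√(1+𝒫²). Then the quantity 2(√(1+𝒫²) − 1) + ℰ² is constant on I. -/
/-- Along any differentiable solution `(𝒫, ℰ)` of the traveling-wave
system `(-w + 𝒫/√(1+𝒫²)) 𝒫' = -ℰ`, `(-w + 𝒫/√(1+𝒫²)) ℰ' = 𝒫/√(1+𝒫²)` on an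
interval, the quantity `2(√(1+𝒫²) - 1) + ℰ²` is constant. -/
theorem stmt18 (w : ℝ) (I : Set ℝ) (hI : I.OrdConnected) (P E dP dE : ℝ → ℝ)
    (hP : ∀ ξ ∈ I, HasDerivAt P (dP ξ) ξ)
    (hE : ∀ ξ ∈ I, HasDerivAt E (dE ξ) ξ)
    (heq1 : ∀ ξ ∈ I, (-w + P ξ / Real.sqrt (1 + (P ξ)^2)) * dP ξ = -(E ξ))
    (heq2 : ∀ ξ ∈ I,
      (-w + P ξ / Real.sqrt (1 + (P ξ)^2)) * dE ξ = P ξ / Real.sqrt (1 + (P ξ)^2)) :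
    ∃ c : ℝ, ∀ ξ ∈ I, 2 * (Real.sqrt (1 + (P ξ)^2) - 1) + (E ξ)^2 = c := by
  set F : ℝ → ℝ := fun ξ => 2 * (Real.sqrt (1 + (P ξ)^2) - 1) + (E ξ)^2 with hF_def
  have hF : ∀ ξ ∈ I, HasDerivAt F 0 ξ := by
    intro ξ hξ
    have hpos : (0:ℝ) < 1 + (P ξ)^2 := by positivity
    have hspos : 0 < Real.sqrt (1 + (P ξ)^2) := Real.sqrt_pos.mpr hpos
    set s := Real.sqrt (1 + (P ξ)^2) with hs_def
    -- derivative of sqrt(1+P²)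
    have hsq : HasDerivAt (fun ξ => Real.sqrt (1 + (P ξ)^2))
        (1 / (2 * s) * (0 + 2 * P ξ ^ 1 * dP ξ)) ξ :=
      (Real.hasDerivAt_sqrt (ne_of_gt hpos)).comp ξ
        ((hasDerivAt_const ξ (1:ℝ)).add ((hP ξ hξ).pow 2))
    have hE2 : HasDerivAt (fun ξ => (E ξ)^2) (2 * E ξ ^ 1 * dE ξ) ξ := (hE ξ hξ).pow 2
    have hFd : HasDerivAt F
        (2 * (1 / (2 * s) * (0 + 2 * P ξ ^ 1 * dP ξ)) + 2 * E ξ ^ 1 * dE ξ) ξ :=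
      ((hsq.sub_const 1).const_mul 2).add hE2
    -- the key algebraic identity: P/s * dP + E * dE = 0
    have hkey : P ξ / s * dP ξ + E ξ * dE ξ = 0 := by
      have h1 := heq1 ξ hξ
      have h2 := heq2 ξ hξ
      rw [← hs_def] at h1 h2
      set a := -w + P ξ / s with ha
      by_cases haz : a = 0
      · rw [haz, zero_mul] at h1 h2
        have hE0 : E ξ = 0 := by linarith
        rw [← h2, hE0]
        ring
      · have hdP : dP ξ = -(E ξ) / a := by field_simp at h1 ⊢; linarith [h1]
        have hdE : dE ξ = (P ξ / s) / a := by field_simp at h2 ⊢; linarith [h2]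
        rw [hdP, hdE]
        field_simp
        ring
    have : 2 * (1 / (2 * s) * (0 + 2 * P ξ ^ 1 * dP ξ)) + 2 * E ξ ^ 1 * dE ξ = 0 := by
      have hsne : s ≠ 0 := ne_of_gt hspos
      field_simp at hkey ⊢
      linarith [hkey]
    rwa [this] at hFd
  rcases Set.eq_empty_or_nonempty I with hIe | ⟨ξ₀, hξ₀⟩
  · exact ⟨0, fun ξ hξ => absurd hξ (by simp [hIe])⟩
  · refine ⟨F ξ₀, ?_⟩
    have key : ∀ a ∈ I, ∀ b ∈ I, a ≤ b → F b = F a := by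
      intro a ha b hb hab
      have hsub : Set.Icc a b ⊆ I := hI.out ha hb
      exact constant_of_has_deriv_right_zero
        (fun x hx => (hF x (hsub hx)).continuousAt.continuousWithinAt)
        (fun x hx => (hF x (hsub ⟨hx.1, hx.2.le⟩)).hasDerivWithinAt)
        b ⟨hab, le_refl b⟩
    intro ξ hξ
    rcases le_total ξ ξ₀ with h | h
    · exact (key ξ hξ ξ₀ hξ₀ h).symm
    · exact key ξ₀ hξ₀ ξ hξ h
end
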